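/- arXiv:2103.06613 — 10 statements merged into one kernel-verified Lean document; each statement's English description precedes it below -/
import Mathlib

section
/- Let q ≥ 1, n ≥ 1, let G be a real q×n matrix, let X ⊆ ℝⁿ be nonempty, Γ(x) = (Gx, −eᵀGx), P := Γ[X] + ℝ₊^{q+1}, Y := {Gx : x ∈ X}, and H := {y ∈ ℝ^{q+1} : eᵀy = 0}. If P_inner ⊆ ℝ^{q+1} satisfies P_inner ⊆ P, then π[P_inner ∩ H] ⊆ Y. -/
noncomputable section
open Pointwise

def euc {m : ℕ} (x : Fin m → ℝ) : EuclideanSpace ℝ (Fin m) := WithLp.toLp 2 x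

def Gam {q n : ℕ} (G : Matrix (Fin q) (Fin n) ℝ) (x : Fin n → ℝ) :
    EuclideanSpace ℝ (Fin (q + 1)) :=
  euc (Fin.snoc (G.mulVec x) (-(∑ j, G.mulVec x j)))

def orth (m : ℕ) : Set (EuclideanSpace ℝ (Fin m)) := {y | ∀ i, 0 ≤ y i}

def hyp (q : ℕ) : Set (EuclideanSpace ℝ (Fin (q + 1))) := {y | ∑ i, y i = 0}

def proj {q : ℕ} (y : EuclideanSpace ℝ (Fin (q + 1))) : EuclideanSpace ℝ (Fin q) :=
  euc (fun i => y i.castSucc)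

def phi {q : ℕ} (y ys : EuclideanSpace ℝ (Fin (q + 1))) : ℝ :=
  (∑ i : Fin q, y i.castSucc * ys i.castSucc) +
    y (Fin.last q) * (1 - ∑ i : Fin q, ys i.castSucc) - ys (Fin.last q)

/-- P_inner ⊆ P implies π[P_inner ∩ H] ⊆ Y. -/
theorem stmt_2 (q n : ℕ) (hq : 1 ≤ q) (hn : 1 ≤ n)
    (G : Matrix (Fin q) (Fin n) ℝ) (X : Set (Fin n → ℝ)) (hX : X.Nonempty)
    (Pinner : Set (EuclideanSpace ℝ (Fin (q + 1))))
    (h : Pinner ⊆ (Gam G '' X) + orth (q + 1)) :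
    proj '' (Pinner ∩ hyp q) ⊆ (fun x => euc (G.mulVec x)) '' X := by
  rintro z ⟨y, ⟨hyP, hyH⟩, rfl⟩
  obtain ⟨a, ⟨x, hx, rfl⟩, c, hc, rfl⟩ := h hyP
  have hsum : ∑ i, (Gam G x) i = 0 := by
    simp [Gam, euc, Fin.sum_univ_castSucc]
  have hcsum : ∑ i, c i = 0 := by
    have := hyH
    simp only [hyp, Set.mem_setOf_eq] at this
    have : ∑ i, ((Gam G x) i + c i) = 0 := this
    rw [Finset.sum_add_distrib, hsum, zero_add] at this
    exact this
  have hc0 : ∀ i, c i = 0 := by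
    intro i
    have := (Finset.sum_eq_zero_iff_of_nonneg (fun i _ => hc i)).mp hcsum
    exact this i (Finset.mem_univ i)
  refine ⟨x, hx, ?_⟩
  ext i
  simp [proj, hc0, Gam, euc, Fin.snoc_castSucc]
end
end

section
/- Let q ≥ 1, let ε > 0, let S ⊆ ℝ^{q+1} be a nonempty convex set, and let V ⊆ ℝ^{q+1} be a nonempty finite set such that for every v ∈ V there exists o ∈ S with o ≤ v + εe (componentwise). Then (conv V + ℝ₊^{q+1}) + {εe} ⊆ S + ℝ₊^{q+1}. (This is the content of the stopping criterion of the primal Benson type algorithm: if every vertex v of the outer approximation P_outer = conv V + ℝ₊^{q+1} admits a point o of the image Γ[X] with o − v ≤ εe, then P_outer + εe is contained in the upper image P = Γ[X] + ℝ₊^{q+1}.) -/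
noncomputable section
open Pointwise

/-- stopping criterion of the primal Benson algorithm. -/
theorem stmt_4 (q : ℕ) (hq : 1 ≤ q) (ε : ℝ) (hε : 0 < ε)
    (S : Set (EuclideanSpace ℝ (Fin (q + 1)))) (hS : S.Nonempty) (hSconv : Convex ℝ S)
    (V : Set (EuclideanSpace ℝ (Fin (q + 1)))) (hVne : V.Nonempty) (hVfin : V.Finite)
    (h : ∀ v ∈ V, ∃ o ∈ S, ∀ i, o i ≤ v i + ε) :
    (convexHull ℝ V + orth (q + 1)) + {euc fun _ => ε} ⊆ S + orth (q + 1) := by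
  intro p hp
  obtain ⟨w, hw, z, hz, rfl⟩ := hp
  obtain ⟨x, hx, r, hr, rfl⟩ := hw
  rw [Set.mem_singleton_iff] at hz; subst hz
  have hTconv : Convex ℝ {y : EuclideanSpace ℝ (Fin (q+1)) | ∃ o ∈ S, ∀ i, o i ≤ y i + ε} := by
    rintro y1 ⟨o1, ho1, h1⟩ y2 ⟨o2, ho2, h2⟩ a b ha hb hab
    refine ⟨a • o1 + b • o2, hSconv ho1 ho2 ha hb hab, fun i => ?_⟩
    have e1 := h1 i
    have e2 := h2 i
    simp only [PiLp.add_apply, PiLp.smul_apply, smul_eq_mul]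
    nlinarith
  have hx' : x ∈ {y : EuclideanSpace ℝ (Fin (q+1)) | ∃ o ∈ S, ∀ i, o i ≤ y i + ε} :=
    convexHull_min h hTconv hx
  obtain ⟨o, hoS, ho⟩ := hx'
  refine ⟨o, hoS, (x + r + euc fun _ => ε) - o, fun i => ?_, by beta_reduce; abel⟩
  have := ho i
  have := hr i
  simp only [PiLp.add_apply, PiLp.sub_apply, euc]
  linarith
end
end

section
/- Let q ≥ 1 and ε ≥ 0. If t ∈ ℝ^q satisfies tᵢ ≤ ε for all i ∈ {1, …, q} and ∑_{i=1}^q tᵢ ≥ −ε, then ‖t‖₂ ≤ ε√(q² + q − 1). Moreover this bound is attained, e.g. by the point t = (−εq, ε, …, ε). -/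
noncomputable section
open Pointwise

lemma sum_sq_le_sq_sum {q : ℕ} (s : Fin q → ℝ) (hs : ∀ i, 0 ≤ s i) :
    ∑ i, (s i) ^ 2 ≤ (∑ i, s i) ^ 2 := by
  have h : ∀ i ∈ Finset.univ, (s i) ^ 2 ≤ s i * (∑ j, s j) := by
    intro i _
    have : s i ≤ ∑ j, s j := Finset.single_le_sum (fun j _ => hs j) (Finset.mem_univ i)
    nlinarith [hs i]
  calc ∑ i, (s i) ^ 2 ≤ ∑ i, s i * (∑ j, s j) := Finset.sum_le_sum h
    _ = (∑ i, s i) ^ 2 := by rw [← Finset.sum_mul]; ring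

/-- norm bound on the polytope T, and its attainment at (−εq, ε, …, ε). -/
theorem stmt_6 (q : ℕ) (hq : 1 ≤ q) (ε : ℝ) (hε : 0 ≤ ε) :
    (∀ t : EuclideanSpace ℝ (Fin q), (∀ i, t i ≤ ε) → -ε ≤ ∑ i, t i →
      ‖t‖ ≤ ε * Real.sqrt ((q : ℝ) ^ 2 + q - 1)) ∧
    (∀ i, (euc fun j : Fin q => if (j : ℕ) = 0 then -(ε * q) else ε) i ≤ ε) ∧
    (-ε ≤ ∑ i, (euc fun j : Fin q => if (j : ℕ) = 0 then -(ε * q) else ε) i) ∧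
    ‖euc fun j : Fin q => if (j : ℕ) = 0 then -(ε * q) else ε‖
      = ε * Real.sqrt ((q : ℝ) ^ 2 + q - 1) := by
  have hq1 : (1 : ℝ) ≤ (q : ℝ) := by exact_mod_cast hq
  have hA : (0 : ℝ) ≤ (q : ℝ) ^ 2 + q - 1 := by nlinarith
  have key : ∀ t : EuclideanSpace ℝ (Fin q), (∀ i, t i ≤ ε) → -ε ≤ ∑ i, t i →
      ‖t‖ ≤ ε * Real.sqrt ((q : ℝ) ^ 2 + q - 1) := by
    intro t ht hsum
    have hs : ∀ i, 0 ≤ ε - t i := fun i => by linarith [ht i]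
    set S := ∑ i, (ε - t i) with hS
    have hS0 : 0 ≤ S := Finset.sum_nonneg fun i _ => hs i
    have hSle : S ≤ ((q : ℝ) + 1) * ε := by
      have : S = q * ε - ∑ i, t i := by
        simp [hS, Finset.sum_sub_distrib, mul_comm]
      rw [this]; linarith
    have hsq : ∑ i, (ε - t i) ^ 2 ≤ S ^ 2 := sum_sq_le_sq_sum _ hs
    have hexp : ∑ i, (t i) ^ 2 = (q : ℝ) * ε ^ 2 - 2 * ε * S + ∑ i, (ε - t i) ^ 2 := by
      rw [show (∑ i, (t i) ^ 2) = ∑ i, (ε ^ 2 - 2 * ε * (ε - t i) + (ε - t i) ^ 2) from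
        Finset.sum_congr rfl (fun i _ => by ring),
        Finset.sum_add_distrib, Finset.sum_sub_distrib, Finset.sum_const, Finset.card_univ,
        Fintype.card_fin, nsmul_eq_mul, ← Finset.mul_sum, ← hS]
    have hbound : ∑ i, (t i) ^ 2 ≤ ε ^ 2 * ((q : ℝ) ^ 2 + q - 1) := by
      rw [hexp]
      nlinarith [mul_nonneg (sub_nonneg.2 hSle) (by nlinarith : 0 ≤ S + ((q:ℝ) - 1) * ε)]
    rw [EuclideanSpace.norm_eq]
    have hrw : ∀ i, ‖t i‖ ^ 2 = (t i) ^ 2 := fun i => by rw [Real.norm_eq_abs, sq_abs]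
    simp only [hrw]
    calc Real.sqrt (∑ i, (t i) ^ 2) ≤ Real.sqrt (ε ^ 2 * ((q : ℝ) ^ 2 + q - 1)) :=
          Real.sqrt_le_sqrt hbound
      _ = ε * Real.sqrt ((q : ℝ) ^ 2 + q - 1) := by
          rw [Real.sqrt_mul (sq_nonneg ε), Real.sqrt_sq hε]
  refine ⟨key, ?_, ?_, ?_⟩
  · intro i
    simp only [euc, WithLp.ofLp_toLp]
    split
    · nlinarith
    · exact le_refl ε
  · obtain ⟨p, rfl⟩ : ∃ p, q = p + 1 := ⟨q - 1, by omega⟩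
    have : ∑ i, (euc fun j : Fin (p + 1) => if (j : ℕ) = 0 then -(ε * (p + 1 : ℕ)) else ε) i
        = -(ε * (p + 1 : ℕ)) + ∑ i : Fin p, ε := by
      rw [show (∑ i, (euc fun j : Fin (p + 1) => if (j : ℕ) = 0 then -(ε * (p + 1 : ℕ)) else ε) i)
        = ∑ i : Fin (p + 1), (if (i : ℕ) = 0 then -(ε * (p + 1 : ℕ)) else ε) from rfl,
        Fin.sum_univ_succ]
      simp
    rw [this]
    simp only [Finset.sum_const, Finset.card_univ, Fintype.card_fin, nsmul_eq_mul]
    push_cast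
    nlinarith
  · rw [EuclideanSpace.norm_eq]
    have hsum : ∑ i : Fin q, ‖(euc fun j : Fin q => if (j : ℕ) = 0 then -(ε * q) else ε) i‖ ^ 2
        = ε ^ 2 * ((q : ℝ) ^ 2 + q - 1) := by
      obtain ⟨p, rfl⟩ : ∃ p, q = p + 1 := ⟨q - 1, by omega⟩
      rw [show (∑ i : Fin (p+1), ‖(euc fun j : Fin (p+1) =>
          if (j : ℕ) = 0 then -(ε * (p+1 : ℕ)) else ε) i‖ ^ 2)
        = ∑ i : Fin (p + 1), ‖(if (i : ℕ) = 0 then -(ε * (p+1 : ℕ)) else ε : ℝ)‖ ^ 2 from rfl,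
        Fin.sum_univ_succ]
      simp only [Fin.val_zero, if_pos rfl, Fin.val_succ, Nat.succ_ne_zero, if_neg,
        Real.norm_eq_abs, sq_abs, Finset.sum_const, Finset.card_univ, Fintype.card_fin,
        nsmul_eq_mul]
      push_cast
      ring
    rw [hsum, Real.sqrt_mul (sq_nonneg ε), Real.sqrt_sq hε]
end
end

section
/- Let q ≥ 1, n ≥ 1, let G be a real q×n matrix, let X ⊆ ℝⁿ be a nonempty compact convex set, and define Γ(x) = (Gx, −eᵀGx), Y := {Gx : x ∈ X}, P := Γ[X] + ℝ₊^{q+1}, and H := {y ∈ ℝ^{q+1} : eᵀy = 0}. Let ε > 0 and let P_outer ⊆ ℝ^{q+1} satisfy P ⊆ P_outer and P_outer + {εe} ⊆ P, and set Y_outer := π[P_outer ∩ H]. Then Y ⊆ Y_outer and d_H(Y_outer, Y) ≤ ε√(q² + q − 1). -/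
noncomputable section
open Pointwise

lemma key_ineq (q : ℕ) (hq : 1 ≤ q) (ε : ℝ) (hε : 0 < ε)
    (c : Fin (q + 1) → ℝ) (hc : ∀ i, 0 ≤ c i)
    (hsum : ∑ i, c i = (q + 1) * ε) :
    ∑ i : Fin q, (c i.castSucc - ε) ^ 2 ≤ ε ^ 2 * ((q : ℝ) ^ 2 + q - 1) := by
  set s : ℝ := ∑ i : Fin q, c i.castSucc with hs
  have hsq : ∑ i : Fin q, (c i.castSucc) ^ 2 ≤ s ^ 2 :=
    Finset.sum_sq_le_sq_sum_of_nonneg (fun i _ => hc _)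
  have hs0 : 0 ≤ s := Finset.sum_nonneg fun i _ => hc _
  have hsle : s ≤ (q + 1) * ε := by
    rw [Fin.sum_univ_castSucc] at hsum
    have := hc (Fin.last q)
    linarith
  have hexp : ∑ i : Fin q, (c i.castSucc - ε) ^ 2
      = (∑ i : Fin q, (c i.castSucc) ^ 2) - 2 * ε * s + q * ε ^ 2 := by
    simp_rw [sub_sq]
    rw [Finset.sum_add_distrib, Finset.sum_sub_distrib]
    simp only [Finset.sum_const, Finset.card_univ, Fintype.card_fin, nsmul_eq_mul]
    have : ∑ x : Fin q, 2 * c x.castSucc * ε = 2 * ε * s := by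
      rw [hs, Finset.mul_sum]; exact Finset.sum_congr rfl fun i _ => by ring
    rw [this]
  have hq1 : (1 : ℝ) ≤ q := by exact_mod_cast hq
  nlinarith [mul_nonneg (sub_nonneg.2 hsle) (by nlinarith : (0:ℝ) ≤ s + (q - 1) * ε)]


lemma gam_sum {q n : ℕ} (G : Matrix (Fin q) (Fin n) ℝ) (x : Fin n → ℝ) :
    ∑ i, Gam G x i = 0 := by
  simp [Gam, euc, Fin.sum_univ_castSucc]

/-- error bound for (CPP) via the primal Benson algorithm. -/
theorem stmt_7 (q n : ℕ) (hq : 1 ≤ q) (hn : 1 ≤ n)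
    (G : Matrix (Fin q) (Fin n) ℝ) (X : Set (Fin n → ℝ))
    (hX : X.Nonempty) (hXc : IsCompact X) (hXconv : Convex ℝ X)
    (ε : ℝ) (hε : 0 < ε)
    (Pouter : Set (EuclideanSpace ℝ (Fin (q + 1))))
    (h1 : (Gam G '' X) + orth (q + 1) ⊆ Pouter)
    (h2 : Pouter + {euc fun _ => ε} ⊆ (Gam G '' X) + orth (q + 1)) :
    (fun x => euc (G.mulVec x)) '' X ⊆ proj '' (Pouter ∩ hyp q) ∧
    Metric.hausdorffDist (proj '' (Pouter ∩ hyp q)) ((fun x => euc (G.mulVec x)) '' X)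
      ≤ ε * Real.sqrt ((q : ℝ) ^ 2 + q - 1) := by
  have hr0 : 0 ≤ ε * Real.sqrt ((q : ℝ) ^ 2 + q - 1) :=
    mul_nonneg hε.le (Real.sqrt_nonneg _)
  have hsub : (fun x => euc (G.mulVec x)) '' X ⊆ proj '' (Pouter ∩ hyp q) := by
    rintro _ ⟨x, hx, rfl⟩
    refine ⟨Gam G x, ⟨h1 ?_, ?_⟩, ?_⟩
    · refine ⟨Gam G x, ⟨x, hx, rfl⟩, 0, fun i => le_refl 0, add_zero _⟩
    · exact gam_sum G x
    · ext i
      simp [proj, Gam, euc]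
  refine ⟨hsub, Metric.hausdorffDist_le_of_infDist hr0 ?_ ?_⟩
  · rintro _ ⟨y, ⟨hyP, hyH⟩, rfl⟩
    have hmem : y + (euc fun _ => ε) ∈ (Gam G '' X) + orth (q + 1) :=
      h2 (Set.add_mem_add hyP rfl)
    obtain ⟨-, ⟨x, hx, rfl⟩, c, hc, heq⟩ := hmem
    have hcomp : ∀ i, Gam G x i + c i = y i + ε := fun i => congrArg (fun v => v i) heq
    have hcsum : ∑ i, c i = (q + 1) * ε := by
      have h1' : ∑ i, (Gam G x i + c i) = ∑ i, (y i + ε) :=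
        Finset.sum_congr rfl fun i _ => hcomp i
      rw [Finset.sum_add_distrib, Finset.sum_add_distrib, gam_sum, hyH] at h1'
      simpa using h1'
    have key := key_ineq q hq ε hε c hc hcsum
    have hdiff : ∀ i : Fin q, proj y i - G.mulVec x i = c i.castSucc - ε := by
      intro i
      have := hcomp i.castSucc
      simp only [Gam, euc, PiLp.toLp_apply, Fin.snoc_castSucc] at this
      simp only [proj, euc, PiLp.toLp_apply]
      linarith
    have hd : dist (proj y) (euc (G.mulVec x)) ≤ ε * Real.sqrt ((q : ℝ) ^ 2 + q - 1) := by
      rw [EuclideanSpace.dist_eq]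
      have hsum' : ∑ i : Fin q, dist (proj y i) (euc (G.mulVec x) i) ^ 2
          = ∑ i : Fin q, (c i.castSucc - ε) ^ 2 := by
        refine Finset.sum_congr rfl fun i _ => ?_
        rw [Real.dist_eq, sq_abs]
        show (proj y i - G.mulVec x i) ^ 2 = _
        rw [hdiff i]
      rw [hsum']
      calc Real.sqrt (∑ i : Fin q, (c i.castSucc - ε) ^ 2)
          ≤ Real.sqrt (ε ^ 2 * ((q : ℝ) ^ 2 + q - 1)) := Real.sqrt_le_sqrt key
        _ = ε * Real.sqrt ((q : ℝ) ^ 2 + q - 1) := by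
            rw [Real.sqrt_mul (sq_nonneg ε), Real.sqrt_sq hε.le]
    calc Metric.infDist (proj y) ((fun x => euc (G.mulVec x)) '' X)
        ≤ dist (proj y) (euc (G.mulVec x)) :=
          Metric.infDist_le_dist_of_mem ⟨x, hx, rfl⟩
      _ ≤ _ := hd
  · intro z hz
    rw [Metric.infDist_zero_of_mem (hsub hz)]
    exact hr0
end
end

section
/- Let q ≥ 1 and ε = 1/(q+1). Let P := {x ∈ ℝ^{q+1} : x + (1/(q+1))e ≥ 0 and eᵀ(x + (1/(q+1))e) ≥ 1} and P_outer := {−(1/(q+1))e} + ℝ₊^{q+1}. Then P ⊆ P_outer, P_outer + {εe} ⊆ P, and d_H(P_outer, P) = ε√(q+1) = 1/√(q+1). In particular, the bound d_H(P_outer, P) ≤ ε√(q+1) for outer approximations of upper images of multiobjective convex programs is tight. -/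
noncomputable section
open Pointwise

/-- tightness of the bound ε√(q+1) for the primal algorithm (Example 3.1). -/
theorem stmt_8 (q : ℕ) (hq : 1 ≤ q) (ε : ℝ) (hε : ε = 1 / ((q : ℝ) + 1))
    (P Pouter : Set (EuclideanSpace ℝ (Fin (q + 1))))
    (hP : P = {x | (∀ i, 0 ≤ x i + 1 / ((q : ℝ) + 1)) ∧
      1 ≤ ∑ i, (x i + 1 / ((q : ℝ) + 1))})
    (hPo : Pouter = {euc fun _ => -(1 / ((q : ℝ) + 1))} + orth (q + 1)) :
    P ⊆ Pouter ∧ Pouter + {euc fun _ => ε} ⊆ P ∧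
    Metric.hausdorffDist Pouter P = ε * Real.sqrt ((q : ℝ) + 1) ∧
    ε * Real.sqrt ((q : ℝ) + 1) = 1 / Real.sqrt ((q : ℝ) + 1) := by
  have hq1 : (0 : ℝ) < (q : ℝ) + 1 := by positivity
  set c : ℝ := 1 / ((q : ℝ) + 1) with hc
  have hcpos : 0 < c := by positivity
  have hcard : ((q + 1 : ℕ) : ℝ) = (q : ℝ) + 1 := by push_cast; ring
  have hsum_c : ∑ _i : Fin (q + 1), c = 1 := by
    rw [Finset.sum_const, Finset.card_univ, Fintype.card_fin, nsmul_eq_mul, hcard, hc]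
    field_simp
  -- characterization of Pouter
  have hPo' : Pouter = {x : EuclideanSpace ℝ (Fin (q + 1)) | ∀ i, -c ≤ x i} := by
    rw [hPo]
    ext x
    constructor
    · rintro ⟨a, ha, b, hb, rfl⟩ i
      simp only [Set.mem_singleton_iff] at ha
      subst ha
      have := hb i
      simp only [PiLp.add_apply]
      show -c ≤ euc (fun _ => -c) i + b i
      simpa [euc] using by linarith [hb i]
    · intro hx
      refine ⟨_, rfl, euc (fun i => x i + c), fun i => by simpa [euc] using by linarith [hx i], ?_⟩
      ext i
      show (euc fun _ => -c) i + (euc fun i => x i + c) i = x i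
      simp [euc]
  have hsub1 : P ⊆ Pouter := by
    rw [hP, hPo']
    rintro x ⟨h1, _⟩ i
    linarith [h1 i]
  have hsub2 : Pouter + {euc fun _ => ε} ⊆ P := by
    rw [hPo', hP]
    rintro x ⟨a, ha, b, hb, rfl⟩
    simp only [Set.mem_singleton_iff] at hb
    subst hb
    set w : EuclideanSpace ℝ (Fin (q+1)) := a + euc fun _ => ε with hw
    have hval : ∀ i, w i + c = (a i + c) + ε := by
      intro i; show a i + ε + c = a i + c + ε; ring
    constructor
    · intro i
      rw [hval i]
      have h := ha i
      have hε0 : 0 < ε := by rw [hε, hc]; positivity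
      linarith [hε0.le]
    · calc (1:ℝ) = ∑ _i : Fin (q+1), ε := by
            rw [Finset.sum_const, Finset.card_univ, Fintype.card_fin, nsmul_eq_mul, hcard, hε, hc]
            field_simp
        _ ≤ ∑ i, (w i + c) := by
            apply Finset.sum_le_sum
            intro i _
            rw [hval i]
            have := ha i
            linarith
  -- norm of the constant ε vector
  have hsq : Real.sqrt ((q:ℝ)+1) * Real.sqrt ((q:ℝ)+1) = (q:ℝ)+1 :=
    Real.mul_self_sqrt (le_of_lt hq1)
  have hsqpos : 0 < Real.sqrt ((q:ℝ)+1) := Real.sqrt_pos.mpr hq1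
  have hεpos : 0 < ε := by rw [hε]; positivity
  have hnorm : ‖euc (fun _ : Fin (q+1) => ε)‖ = ε * Real.sqrt ((q:ℝ)+1) := by
    rw [EuclideanSpace.norm_eq]
    have : ∑ _i : Fin (q+1), ‖ε‖^2 = ((q:ℝ)+1) * ε^2 := by
      rw [Finset.sum_const, Finset.card_univ, Fintype.card_fin, nsmul_eq_mul, hcard,
        Real.norm_eq_abs, sq_abs]
    rw [show (fun i : Fin (q+1) => ‖euc (fun _ : Fin (q+1) => ε) i‖^2) = fun _ => ‖ε‖^2 from rfl,
      this, Real.sqrt_mul (le_of_lt hq1), Real.sqrt_sq (le_of_lt hεpos)]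
    ring
  -- every point of Pouter is within ε√(q+1) of P
  have hclose : ∀ x ∈ Pouter, ∃ y ∈ P, dist x y ≤ ε * Real.sqrt ((q:ℝ)+1) := by
    intro x hx
    refine ⟨x + euc (fun _ => ε), hsub2 ⟨x, hx, _, rfl, rfl⟩, ?_⟩
    rw [dist_self_add_right, hnorm]
  -- vertex and lower bound
  set v : EuclideanSpace ℝ (Fin (q+1)) := euc (fun _ => -c) with hv
  have hvmem : v ∈ Pouter := by rw [hPo']; intro i; simp [hv, euc]
  have hPne : P.Nonempty := by
    refine ⟨0, ?_⟩
    rw [hP]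
    constructor
    · intro i; simpa using le_of_lt hcpos
    · simp only [PiLp.zero_apply, zero_add]
      exact le_of_eq hsum_c.symm
  have hlower : ∀ a ∈ P, 1 / Real.sqrt ((q:ℝ)+1) ≤ dist v a := by
    intro a ha
    rw [hP] at ha
    obtain ⟨_, h2⟩ := ha
    have hdist : dist v a = Real.sqrt (∑ i, (a i + c)^2) := by
      rw [EuclideanSpace.dist_eq]
      congr 1
      apply Finset.sum_congr rfl
      intro i _
      rw [Real.dist_eq, sq_abs]
      have : v i = -c := rfl
      rw [this]; ring
    have hcs : (∑ i, (a i + c))^2 ≤ ((q:ℝ)+1) * ∑ i, (a i + c)^2 := by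
      have := sq_sum_le_card_mul_sum_sq (s := (Finset.univ : Finset (Fin (q+1))))
        (f := fun i => a i + c)
      simpa [Finset.card_univ, hcard] using this
    have h1le : (1:ℝ) ≤ ((q:ℝ)+1) * ∑ i, (a i + c)^2 := by
      have : (1:ℝ) ≤ (∑ i, (a i + c))^2 := by nlinarith
      linarith
    have hd0 : 0 ≤ dist v a := dist_nonneg
    have hdsq : (dist v a)^2 = ∑ i, (a i + c)^2 := by
      rw [hdist, Real.sq_sqrt]
      positivity
    rw [div_le_iff₀ hsqpos]
    have key : 1 ≤ (dist v a * Real.sqrt ((q:ℝ)+1))^2 := by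
      rw [mul_pow, hdsq, sq, hsq]; linarith [h1le]
    nlinarith [key, mul_nonneg hd0 hsqpos.le]
  have hεval : ε * Real.sqrt ((q:ℝ)+1) = 1 / Real.sqrt ((q:ℝ)+1) := by
    rw [hε, div_mul_eq_mul_div, one_mul, div_eq_div_iff hq1.ne' hsqpos.ne', one_mul, hsq]
  -- Hausdorff distance
  have hεsq : 0 ≤ ε * Real.sqrt ((q:ℝ)+1) := le_of_lt (mul_pos hεpos hsqpos)
  have hedist_le : EMetric.hausdorffEdist Pouter P ≤ ENNReal.ofReal (ε * Real.sqrt ((q:ℝ)+1)) := by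
    apply EMetric.hausdorffEdist_le_of_mem_edist
    · intro x hx
      obtain ⟨y, hy, hd⟩ := hclose x hx
      exact ⟨y, hy, (edist_le_ofReal hεsq).mpr hd⟩
    · intro y hy
      exact ⟨y, hsub1 hy, by simpa using hεsq⟩
  have hedist_ne : EMetric.hausdorffEdist Pouter P ≠ ⊤ :=
    ne_top_of_le_ne_top ENNReal.ofReal_ne_top hedist_le
  have hle : Metric.hausdorffDist Pouter P ≤ ε * Real.sqrt ((q:ℝ)+1) := by
    apply Metric.hausdorffDist_le_of_mem_dist hεsq
    · exact hclose
    · intro y hy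
      exact ⟨y, hsub1 hy, by simpa using hεsq⟩
  have hge : 1 / Real.sqrt ((q:ℝ)+1) ≤ Metric.hausdorffDist Pouter P := by
    refine le_trans ?_ (Metric.infDist_le_hausdorffDist_of_mem hvmem hedist_ne)
    rw [Metric.infDist_eq_iInf]
    have : Nonempty P := hPne.to_subtype
    exact le_ciInf fun a => hlower a a.2
  exact ⟨hsub1, hsub2, le_antisymm hle (hεval ▸ hge), hεval⟩
end
end

section
/- Let q ≥ 2, ε = 1/(q+2), and u := (1/(q+2), …, 1/(q+2), 2/(q+2)) ∈ ℝ^q (first q−1 coordinates equal 1/(q+2), last coordinate 2/(q+2)). Let Y := conv{0, e¹, …, e^{q−1}, u} and Y_outer := conv{0, e¹, …, e^q}, where eⁱ denotes the i-th standard unit vector of ℝ^q. Then Y ⊆ Y_outer and d_H(Y_outer, Y) = ‖e^q − u‖₂ = ε√(q² + q − 1). In particular, the bound d_H(Y_outer, Y) ≤ ε√(q² + q − 1) for outer polyhedral approximations of convex projection problems is tight. -/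
noncomputable section
open Pointwise

-- aux: pointwise lemmas
lemma euc_apply {m : ℕ} (x : Fin m → ℝ) (i : Fin m) : euc x i = x i := rfl

lemma le_infDist' {α : Type*} [PseudoMetricSpace α] {s : Set α} {x : α} {r : ℝ}
    (hs : s.Nonempty) (h : ∀ y ∈ s, r ≤ dist x y) : r ≤ Metric.infDist x s := by
  by_contra hc
  push_neg at hc
  obtain ⟨y, hy, hlt⟩ := (Metric.infDist_lt_iff hs).1 hc
  exact absurd (h y hy) (not_le.2 hlt)

-- membership in the corner simplex hull
lemma mem_hull_of_coords {q : ℕ} (w : Fin q → ℝ) (hw : ∀ i, 0 ≤ w i) (hs : ∑ i, w i ≤ 1) :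
    (euc w) ∈ convexHull ℝ
      (insert (0 : EuclideanSpace ℝ (Fin q)) {y | ∃ i : Fin q, y = euc (Pi.single i 1)}) := by
  set gens : Set (EuclideanSpace ℝ (Fin q)) :=
    insert 0 {y | ∃ i : Fin q, y = euc (Pi.single i 1)} with hgens
  have hconv : Convex ℝ (convexHull ℝ gens) := convex_convexHull ℝ gens
  set W : Fin (q+1) → ℝ := Fin.snoc w (1 - ∑ i, w i) with hW
  set z : Fin (q+1) → EuclideanSpace ℝ (Fin q) :=
    Fin.snoc (fun i => euc (Pi.single i 1)) 0 with hz
  have key : euc w = ∑ i : Fin (q+1), W i • z i := by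
    rw [Fin.sum_univ_castSucc]
    simp only [hW, hz, Fin.snoc_castSucc, Fin.snoc_last, smul_zero, add_zero]
    ext j
    have : (∑ i : Fin q, w i • euc (Pi.single i 1)) j
        = ∑ i : Fin q, w i * (Pi.single i 1 : Fin q → ℝ) j := by
      rw [WithLp.ofLp_sum, Finset.sum_apply]
      rfl
    rw [euc_apply, this]
    simp [Pi.single_apply, mul_ite, Finset.sum_ite_eq]
  rw [key]
  refine hconv.sum_mem (fun i _ => ?_) ?_ (fun i _ => ?_)
  · refine Fin.lastCases ?_ (fun j => ?_) i
    · simp [hW, Fin.snoc_last]; linarith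
    · simp [hW, Fin.snoc_castSucc]; exact hw j
  · rw [Fin.sum_univ_castSucc]
    simp [hW]
  · refine Fin.lastCases ?_ (fun j => ?_) i
    · simp only [hz, Fin.snoc_last]
      exact subset_convexHull ℝ gens (by simp [hgens])
    · simp only [hz, Fin.snoc_castSucc]
      exact subset_convexHull ℝ gens (by simp only [hgens]; right; exact ⟨j, rfl⟩)

lemma convex_halfspace' {q : ℕ} (n : Fin q → ℝ) (c : ℝ) :
    Convex ℝ {y : EuclideanSpace ℝ (Fin q) | ∑ i, n i * y i ≤ c} := by
  intro x hx y hy a b ha hb hab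
  simp only [Set.mem_setOf_eq] at hx hy ⊢
  have : ∀ i, n i * (a • x + b • y) i = a * (n i * x i) + b * (n i * y i) := by
    intro i
    have : (a • x + b • y) i = a * x i + b * y i := rfl
    rw [this]; ring
  rw [Finset.sum_congr rfl fun i _ => this i, Finset.sum_add_distrib,
    ← Finset.mul_sum, ← Finset.mul_sum]
  have h1 : a * (∑ i, n i * x i) ≤ a * c := mul_le_mul_of_nonneg_left hx ha
  have h2 : b * (∑ i, n i * y i) ≤ b * c := mul_le_mul_of_nonneg_left hy hb
  have h3 : a * c + b * c = c := by rw [← add_mul, hab, one_mul]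
  linarith

lemma convex_simplex' (q : ℕ) :
    Convex ℝ {y : EuclideanSpace ℝ (Fin q) | (∀ i, 0 ≤ y i) ∧ ∑ i, y i ≤ 1} := by
  intro x hx y hy a b ha hb hab
  constructor
  · intro i
    have : (a • x + b • y) i = a * x i + b * y i := rfl
    rw [this]
    have := hx.1 i; have := hy.1 i
    positivity
  · have : ∀ i : Fin q, (a • x + b • y) i = a * x i + b * y i := fun i => rfl
    rw [Finset.sum_congr rfl fun i _ => this i, Finset.sum_add_distrib,
      ← Finset.mul_sum, ← Finset.mul_sum]
    have h1 : a * (∑ i, x i) ≤ a * 1 := mul_le_mul_of_nonneg_left hx.2 ha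
    have h2 : b * (∑ i, y i) ≤ b * 1 := mul_le_mul_of_nonneg_left hy.2 hb
    linarith

lemma outer_subset_simplex {q : ℕ} :
    convexHull ℝ (insert (0 : EuclideanSpace ℝ (Fin q)) {y | ∃ i : Fin q, y = euc (Pi.single i 1)})
      ⊆ {y : EuclideanSpace ℝ (Fin q) | (∀ i, 0 ≤ y i) ∧ ∑ i, y i ≤ 1} := by
  apply convexHull_min _ (convex_simplex' q)
  rintro y (rfl | ⟨i, rfl⟩)
  · refine ⟨fun i => le_rfl, ?_⟩
    have : ∀ j : Fin q, (0 : EuclideanSpace ℝ (Fin q)) j = 0 := fun _ => rfl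
    rw [Finset.sum_congr rfl fun j _ => this j]
    simp
  · constructor
    · intro j
      rw [euc_apply]
      by_cases h : j = i <;> simp [Pi.single_apply, h]
    · have : ∀ j, euc (Pi.single i 1) j = (Pi.single i 1 : Fin q → ℝ) j := fun _ => rfl
      rw [Finset.sum_congr rfl fun j _ => this j]
      simp [Pi.single_apply, Finset.sum_ite_eq]

lemma sum_if_last {q : ℕ} (hq : 1 ≤ q) (a b : ℝ) :
    ∑ i : Fin q, (if (i : ℕ) = q - 1 then a else b) = a + ((q : ℝ) - 1) * b := by
  have hlt : q - 1 < q := by omega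
  set L : Fin q := ⟨q - 1, hlt⟩ with hL
  have hcond : ∀ i : Fin q, ((i : ℕ) = q - 1) ↔ i = L := by
    intro i; rw [Fin.ext_iff]
  have : ∀ i : Fin q, (if (i : ℕ) = q - 1 then a else b)
      = b + (if i = L then a - b else 0) := by
    intro i
    simp only [hcond i]
    by_cases h : i = L <;> simp [h]
  rw [Finset.sum_congr rfl fun i _ => this i, Finset.sum_add_distrib,
    Finset.sum_const, Finset.sum_ite_eq' Finset.univ L (fun _ => a - b)]
  simp only [Finset.mem_univ, if_true, Finset.card_univ, Fintype.card_fin,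
    nsmul_eq_mul]
  have hq1 : (1:ℝ) ≤ (q:ℝ) := by exact_mod_cast hq
  ring


/-- tightness of the bound ε√(q²+q−1) for the primal algorithm (Example 3.2). -/
theorem stmt_9 (q : ℕ) (hq : 2 ≤ q) (ε : ℝ) (hε : ε = 1 / ((q : ℝ) + 2))
    (u : EuclideanSpace ℝ (Fin q))
    (hu : u = euc fun i => if (i : ℕ) = q - 1 then 2 / ((q : ℝ) + 2) else 1 / ((q : ℝ) + 2))
    (Y Youter : Set (EuclideanSpace ℝ (Fin q)))
    (hY : Y = convexHull ℝ
      (insert 0 (insert u {y | ∃ i : Fin q, (i : ℕ) < q - 1 ∧ y = euc (Pi.single i 1)})))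
    (hYo : Youter = convexHull ℝ (insert 0 {y | ∃ i : Fin q, y = euc (Pi.single i 1)})) :
    Y ⊆ Youter ∧
    Metric.hausdorffDist Youter Y = ‖euc (Pi.single (⟨q - 1, by omega⟩ : Fin q) 1) - u‖ ∧
    Metric.hausdorffDist Youter Y = ε * Real.sqrt ((q : ℝ) ^ 2 + q - 1) := by
  have hqR : (2:ℝ) ≤ (q:ℝ) := by exact_mod_cast hq
  have hq2pos : (0:ℝ) < (q:ℝ) + 2 := by linarith
  have hεpos : 0 < ε := by rw [hε]; positivity
  have hlt : q - 1 < q := by omega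
  set L : Fin q := ⟨q - 1, hlt⟩ with hL
  set elast : EuclideanSpace ℝ (Fin q) := euc (Pi.single L 1) with helast
  have hcond : ∀ i : Fin q, ((i : ℕ) = q - 1) ↔ i = L := fun i => by rw [Fin.ext_iff]
  -- coordinates of u
  have hui : ∀ i : Fin q, u i = if (i : ℕ) = q - 1 then 2 * ε else ε := by
    intro i
    rw [hu, euc_apply, hε]
    by_cases h : (i : ℕ) = q - 1 <;> simp [h] <;> ring
  have huinn : ∀ i : Fin q, 0 ≤ u i := by
    intro i; rw [hui]; by_cases h : (i : ℕ) = q - 1 <;> simp [h] <;> linarith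
  have husum : ∑ i, u i = ((q:ℝ) + 1) * ε := by
    rw [Finset.sum_congr rfl fun i _ => hui i, sum_if_last (by omega)]
    ring
  -- coordinates of elast
  have helasti : ∀ i : Fin q, elast i = if (i : ℕ) = q - 1 then 1 else 0 := by
    intro i
    rw [helast, euc_apply, Pi.single_apply]
    by_cases h : i = L
    · rw [if_pos h, if_pos ((hcond i).2 h)]
    · rw [if_neg h, if_neg (fun hc => h ((hcond i).1 hc))]
  -- the normal vector
  set n : Fin q → ℝ := fun i => elast i - u i with hn
  have hni : ∀ i : Fin q, n i = if (i : ℕ) = q - 1 then 1 - 2 * ε else -ε := by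
    intro i
    rw [hn]
    simp only [helasti i, hui i]
    by_cases h : (i : ℕ) = q - 1 <;> simp [h]
  -- u ∈ Youter
  have huY : u ∈ Youter := by
    rw [hYo]
    have := mem_hull_of_coords (fun i => u i) huinn
      (by rw [husum, hε, mul_one_div, div_le_one hq2pos]; linarith)
    simpa [euc] using this
  have hei : ∀ i : Fin q, euc (Pi.single i 1) ∈ Youter := by
    intro i
    rw [hYo]
    exact subset_convexHull ℝ _ (by right; exact ⟨i, rfl⟩)
  have h0o : (0 : EuclideanSpace ℝ (Fin q)) ∈ Youter := by
    rw [hYo]; exact subset_convexHull ℝ _ (by left; rfl)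
  -- Y ⊆ Youter
  have hYsub : Y ⊆ Youter := by
    rw [hY, hYo]
    apply convexHull_min _ (convex_convexHull ℝ _)
    rintro y (rfl | rfl | ⟨i, hi, rfl⟩)
    · rw [← hYo]; exact h0o
    · rw [← hYo]; exact huY
    · rw [← hYo]; exact hei i
  -- memberships in Y
  have h0Y : (0 : EuclideanSpace ℝ (Fin q)) ∈ Y := by
    rw [hY]; exact subset_convexHull ℝ _ (by left; rfl)
  have huYY : u ∈ Y := by
    rw [hY]; exact subset_convexHull ℝ _ (by right; left; rfl)
  have heiY : ∀ i : Fin q, (i : ℕ) < q - 1 → euc (Pi.single i 1) ∈ Y := by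
    intro i hi
    rw [hY]; exact subset_convexHull ℝ _ (by right; right; exact ⟨i, hi, rfl⟩)
  -- the retraction T
  set T : EuclideanSpace ℝ (Fin q) → EuclideanSpace ℝ (Fin q) :=
    fun y => y + (y L) • (u - elast) with hT
  have hTmem : ∀ x ∈ Youter, T x ∈ Y := by
    have hconvA : Convex ℝ {x : EuclideanSpace ℝ (Fin q) | T x ∈ Y} := by
      intro x hx y hy a b ha hb hab
      have key : T (a • x + b • y) = a • T x + b • T y := by
        ext j
        show (a • x + b • y) j + (a • x + b • y) L * (u j - elast j)
          = a * (x j + x L * (u j - elast j)) + b * (y j + y L * (u j - elast j))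
        have h1 : (a • x + b • y) j = a * x j + b * y j := rfl
        have h2 : (a • x + b • y) L = a * x L + b * y L := rfl
        rw [h1, h2]; ring
      show T (a • x + b • y) ∈ Y
      rw [key]
      have hYconv : Convex ℝ Y := hY ▸ convex_convexHull ℝ _
      exact hYconv hx hy ha hb hab
    have hgens : insert (0 : EuclideanSpace ℝ (Fin q))
        {y | ∃ i : Fin q, y = euc (Pi.single i 1)} ⊆ {x | T x ∈ Y} := by
      rintro y (rfl | ⟨i, rfl⟩)
      · show T 0 ∈ Y
        have : T 0 = 0 := by
          rw [hT]
          show (0 : EuclideanSpace ℝ (Fin q)) + (0:ℝ) • (u - elast) = 0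
          simp
        rw [this]; exact h0Y
      · show T (euc (Pi.single i 1)) ∈ Y
        by_cases h : i = L
        · rw [h, ← helast]
          have hval1 : elast L = 1 := by rw [helasti L]; exact if_pos rfl
          have : T elast = u := by
            show elast + elast L • (u - elast) = u
            rw [hval1, one_smul]
            abel
          rw [this]; exact huYY
        · have hval : (euc (Pi.single i 1)) L = 0 := by
            rw [euc_apply, Pi.single_apply, if_neg (fun hc => h hc.symm)]
          have : T (euc (Pi.single i 1)) = euc (Pi.single i 1) := by
            show euc (Pi.single i 1) + (euc (Pi.single i 1)) L • (u - elast) = _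
            rw [hval, zero_smul, add_zero]
          rw [this]
          exact heiY i (by
            have h1 := i.isLt
            have h2 : (i:ℕ) ≠ q - 1 := fun hc => h ((hcond i).1 hc)
            omega)
    intro x hx
    rw [hYo] at hx
    exact convexHull_min hgens hconvA hx
  -- distance setup
  set D : ℝ := ‖elast - u‖ with hD
  have hDnn : 0 ≤ D := norm_nonneg _
  have hDsq : D = Real.sqrt (∑ i, n i ^ 2) := by
    rw [hD, EuclideanSpace.norm_eq]
    congr 1
    refine Finset.sum_congr rfl fun i _ => ?_
    have h' : (elast - u) i = elast i - u i := rfl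
    rw [h', Real.norm_eq_abs, sq_abs]
  have hTdist : ∀ x ∈ Youter, dist x (T x) ≤ D := by
    intro x hx
    have hxS := outer_subset_simplex (hYo ▸ hx)
    have hx0 : 0 ≤ x L := hxS.1 L
    have hx1 : x L ≤ 1 :=
      le_trans (Finset.single_le_sum (fun i _ => hxS.1 i) (Finset.mem_univ L)) hxS.2
    have hsub : x - T x = (-(x L)) • (u - elast) := by
      show x - (x + x L • (u - elast)) = _
      rw [neg_smul]
      abel
    rw [dist_eq_norm, hsub, norm_smul]
    have hn' : ‖u - elast‖ = D := by rw [hD, norm_sub_rev]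
    rw [hn', Real.norm_eq_abs, abs_neg, abs_of_nonneg hx0]
    calc x L * D ≤ 1 * D := mul_le_mul_of_nonneg_right hx1 hDnn
      _ = D := one_mul D
  -- separation
  have hfu : ∑ i, n i * u i = 2 * ε - ((q:ℝ) + 3) * ε ^ 2 := by
    have h' : ∀ i : Fin q, n i * u i
        = if (i : ℕ) = q - 1 then (1 - 2*ε) * (2*ε) else (-ε) * ε := by
      intro i
      rw [hni, hui]
      by_cases h : (i : ℕ) = q - 1 <;> simp [h]
    rw [Finset.sum_congr rfl fun i _ => h' i, sum_if_last (by omega)]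
    ring
  have hfu_nn : 0 ≤ ∑ i, n i * u i := by
    rw [hfu]
    have h1 : ((q:ℝ) + 3) * ε ≤ 2 := by
      rw [hε, mul_one_div, div_le_iff₀ hq2pos]; linarith
    nlinarith [hεpos, h1]
  have hsep : ∀ y ∈ Y, ∑ i, n i * y i ≤ ∑ i, n i * u i := by
    intro y hy
    have hYsub2 : Y ⊆ {y : EuclideanSpace ℝ (Fin q) | ∑ i, n i * y i ≤ ∑ i, n i * u i} := by
      rw [hY]
      apply convexHull_min _ (convex_halfspace' n _)
      rintro z (rfl | hz | ⟨i, hi, rfl⟩)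
      · have h0 : ∀ i : Fin q, n i * (0 : EuclideanSpace ℝ (Fin q)) i = 0 := by
          intro i
          show n i * 0 = 0
          exact mul_zero _
        show ∑ i, n i * (0 : EuclideanSpace ℝ (Fin q)) i ≤ _
        rw [Finset.sum_congr rfl fun i _ => h0 i, Finset.sum_const_zero]
        exact hfu_nn
      · rw [hz]
        show ∑ i, n i * u i ≤ ∑ i, n i * u i
        exact le_rfl
      · show ∑ j, n j * (euc (Pi.single i 1)) j ≤ _
        have h' : ∀ j : Fin q, n j * (euc (Pi.single i 1)) j
            = if j = i then n j else 0 := by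
          intro j
          rw [euc_apply, Pi.single_apply]
          by_cases h : j = i <;> simp [h]
        rw [Finset.sum_congr rfl fun j _ => h' j,
          Finset.sum_ite_eq' Finset.univ i n]
        simp only [Finset.mem_univ, if_true]
        have hni' : n i = -ε := by
          rw [hni, if_neg (by omega)]
        rw [hni']
        linarith
    exact hYsub2 hy
  have hfar : ∀ y ∈ Y, D ≤ dist elast y := by
    intro y hy
    have hsep' := hsep y hy
    have hsq : ∑ i, n i ^ 2 ≤ ∑ i, (elast i - y i) ^ 2 := by
      have expand : ∀ i : Fin q, (elast i - y i) ^ 2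
          = n i ^ 2 + (2 * (n i * u i) - 2 * (n i * y i)) + (u i - y i) ^ 2 := by
        intro i
        have : n i = elast i - u i := rfl
        rw [this]; ring
      rw [Finset.sum_congr rfl fun i _ => expand i]
      rw [Finset.sum_add_distrib, Finset.sum_add_distrib, Finset.sum_sub_distrib,
        ← Finset.mul_sum, ← Finset.mul_sum]
      have hnn : 0 ≤ ∑ i, (u i - y i) ^ 2 := Finset.sum_nonneg fun i _ => sq_nonneg _
      linarith
    have h1 : dist elast y = Real.sqrt (∑ i, (elast i - y i) ^ 2) := by
      rw [dist_eq_norm, EuclideanSpace.norm_eq]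
      congr 1
      refine Finset.sum_congr rfl fun i _ => ?_
      have h' : (elast - y) i = elast i - y i := rfl
      rw [h', Real.norm_eq_abs, sq_abs]
    rw [h1, hDsq]
    exact Real.sqrt_le_sqrt hsq
  have hYne : Y.Nonempty := ⟨0, h0Y⟩
  have hYone : Youter.Nonempty := ⟨0, h0o⟩
  have hrangefin : ({y : EuclideanSpace ℝ (Fin q) | ∃ i : Fin q, y = euc (Pi.single i 1)}).Finite := by
    have : {y : EuclideanSpace ℝ (Fin q) | ∃ i : Fin q, y = euc (Pi.single i 1)}
        = Set.range (fun i : Fin q => euc (Pi.single i 1)) := by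
      ext y
      simp [Set.range, eq_comm]
    rw [this]
    exact Set.finite_range _
  have hfin : EMetric.hausdorffEdist Youter Y ≠ ⊤ := by
    apply Metric.hausdorffEdist_ne_top_of_nonempty_of_bounded hYone hYne
    · rw [hYo]
      exact isBounded_convexHull.2 (hrangefin.insert 0).isBounded
    · rw [hY]
      refine isBounded_convexHull.2 ?_
      refine (Set.Finite.insert 0 (Set.Finite.insert u (Set.Finite.subset hrangefin ?_))).isBounded
      rintro y ⟨i, _, rfl⟩
      exact ⟨i, rfl⟩
  have hub : Metric.hausdorffDist Youter Y ≤ D :=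
    Metric.hausdorffDist_le_of_mem_dist hDnn
      (fun x hx => ⟨T x, hTmem x hx, hTdist x hx⟩)
      (fun y hy => ⟨y, hYsub hy, by rw [dist_self]; exact hDnn⟩)
  have hlb : D ≤ Metric.hausdorffDist Youter Y :=
    le_trans (le_infDist' hYne hfar) (Metric.infDist_le_hausdorffDist_of_mem (hei L) hfin)
  have hDeq : Metric.hausdorffDist Youter Y = D := le_antisymm hub hlb
  have hnum : D = ε * Real.sqrt ((q:ℝ) ^ 2 + q - 1) := by
    have hsum : ∑ i, n i ^ 2 = ε ^ 2 * ((q:ℝ) ^ 2 + q - 1) := by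
      have h' : ∀ i : Fin q, n i ^ 2
          = if (i : ℕ) = q - 1 then (1 - 2*ε) ^ 2 else ε ^ 2 := by
        intro i
        rw [hni]
        by_cases h : (i : ℕ) = q - 1 <;> simp [h]
      rw [Finset.sum_congr rfl fun i _ => h' i, sum_if_last (by omega)]
      have h12 : 1 - 2 * ε = (q:ℝ) * ε := by
        rw [hε]; field_simp; ring
      rw [h12]; ring
    rw [hDsq, hsum, Real.sqrt_mul (sq_nonneg ε), Real.sqrt_sq hεpos.le]
  refine ⟨hYsub, ?_, ?_⟩
  · rw [hDeq]
  · rw [hDeq, hnum]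
end
end

section
/- Let q ≥ 1, n ≥ 1, let G be a real q×n matrix, let X ⊆ ℝⁿ be nonempty and compact, and define Γ(x) = (Gx, −eᵀGx) and P := Γ[X] + ℝ₊^{q+1}. Define the lower image D := {(t₁, …, t_q, s) ∈ ℝ^{q+1} : w(t) ≥ 0 and s ≤ inf_{x ∈ X} w(t)ᵀΓ(x)}, where t = (t₁, …, t_q) and w(t) := (t₁, …, t_q, 1 − ∑_{i=1}^q tᵢ). Then weak duality holds: for every y ∈ P and every y* ∈ D, φ(y, y*) ≥ 0. -/
noncomputable section
open Pointwise

lemma Gam_castSucc {q n : ℕ} (G : Matrix (Fin q) (Fin n) ℝ) (x : Fin n → ℝ) (i : Fin q) :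
    Gam G x i.castSucc = G.mulVec x i := by
  simp [Gam, euc]

lemma Gam_last {q n : ℕ} (G : Matrix (Fin q) (Fin n) ℝ) (x : Fin n → ℝ) :
    Gam G x (Fin.last q) = -(∑ j, G.mulVec x j) := by
  simp [Gam, euc]

/-- weak duality between the upper image P and the lower image D. -/
theorem stmt_10 (q n : ℕ) (hq : 1 ≤ q) (hn : 1 ≤ n)
    (G : Matrix (Fin q) (Fin n) ℝ) (X : Set (Fin n → ℝ))
    (hX : X.Nonempty) (hXc : IsCompact X)
    (D : Set (EuclideanSpace ℝ (Fin (q + 1))))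
    (hD : D = {ys | (∀ i : Fin q, 0 ≤ ys i.castSucc) ∧ (∑ i : Fin q, ys i.castSucc) ≤ 1 ∧
      ys (Fin.last q) ≤ ⨅ x : X, ((∑ i : Fin q, ys i.castSucc * Gam G x.1 i.castSucc) +
        (1 - ∑ i : Fin q, ys i.castSucc) * Gam G x.1 (Fin.last q))}) :
    ∀ y ∈ (Gam G '' X) + orth (q + 1), ∀ ys ∈ D, 0 ≤ phi y ys := by
  rintro y hy ys hys
  rw [Set.mem_add] at hy
  obtain ⟨a, ⟨x, hx, rfl⟩, z, hz, rfl⟩ := hy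
  subst hD
  obtain ⟨h1, h2, h3⟩ := hys
  set f : (Fin n → ℝ) → ℝ := fun x =>
    (∑ i : Fin q, ys i.castSucc * Gam G x i.castSucc) +
      (1 - ∑ i : Fin q, ys i.castSucc) * Gam G x (Fin.last q) with hf
  have hfc : Continuous f := by
    have hm : ∀ i : Fin q, Continuous fun x : Fin n → ℝ => G.mulVec x i := by
      intro i
      have : (fun x : Fin n → ℝ => G.mulVec x i) = fun x => ∑ j, G i j * x j := by
        funext x; simp [Matrix.mulVec, dotProduct]
      rw [this]
      exact continuous_finset_sum _ fun j _ => continuous_const.mul (continuous_apply j)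
    simp only [hf, Gam_castSucc, Gam_last]
    apply Continuous.add
    · exact continuous_finset_sum _ fun i _ => continuous_const.mul (hm i)
    · exact continuous_const.mul (continuous_finset_sum _ fun j _ => hm j).neg
  have hbdd : BddBelow (Set.range fun x : X => f x.1) := by
    have : Set.range (fun x : X => f x.1) = f '' X := by
      ext r; simp [Set.mem_image]
    rw [this]
    exact (hXc.image hfc).bddBelow
  have hinf : ys (Fin.last q) ≤ f x := by
    refine le_trans h3 (ciInf_le hbdd ⟨x, hx⟩)
  -- pointwise: (Gam G x + z) i = Gam G x i + z i
  have happ : ∀ i, (Gam G x + z) i = Gam G x i + z i := fun i => rfl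
  have hc : 0 ≤ 1 - ∑ i : Fin q, ys i.castSucc := by linarith
  have key : f x ≤ (∑ i : Fin q, (Gam G x + z) i.castSucc * ys i.castSucc) +
      (Gam G x + z) (Fin.last q) * (1 - ∑ i : Fin q, ys i.castSucc) := by
    simp only [happ, hf]
    have t1 : ∑ i : Fin q, ys i.castSucc * Gam G x i.castSucc ≤
        ∑ i : Fin q, (Gam G x i.castSucc + z i.castSucc) * ys i.castSucc := by
      apply Finset.sum_le_sum
      intro i _
      rw [mul_comm]
      have := hz i.castSucc
      nlinarith [h1 i]
    have t2 : (1 - ∑ i : Fin q, ys i.castSucc) * Gam G x (Fin.last q) ≤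
        (Gam G x (Fin.last q) + z (Fin.last q)) * (1 - ∑ i : Fin q, ys i.castSucc) := by
      rw [mul_comm]
      have := hz (Fin.last q)
      nlinarith
    linarith
  unfold phi
  linarith
end
end

section
/- Let q ≥ 1, n ≥ 1, let G be a real q×n matrix, let X ⊆ ℝⁿ be nonempty and compact, and define Γ(x) = (Gx, −eᵀGx), P := Γ[X] + ℝ₊^{q+1}, and the lower image D := {(t₁, …, t_q, s) ∈ ℝ^{q+1} : w(t) ≥ 0 and s ≤ inf_{x ∈ X} w(t)ᵀΓ(x)}. Let ε > 0 and let D_outer ⊆ ℝ^{q+1} be a set satisfying D_outer − {ε e^{q+1}} ⊆ D, where e^{q+1} is the last standard unit vector of ℝ^{q+1}. Define P_inner := {y ∈ ℝ^{q+1} : φ(y, y*) ≥ 0 for all y* ∈ D_outer}. Then P + {εe} ⊆ P_inner. -/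
noncomputable section
open Pointwise

/-- stopping criterion of the dual Benson algorithm yields P + {εe} ⊆ P_inner. -/
theorem stmt_11 (q n : ℕ) (hq : 1 ≤ q) (hn : 1 ≤ n)
    (G : Matrix (Fin q) (Fin n) ℝ) (X : Set (Fin n → ℝ))
    (hX : X.Nonempty) (hXc : IsCompact X)
    (ε : ℝ) (hε : 0 < ε)
    (D Douter Pinner : Set (EuclideanSpace ℝ (Fin (q + 1))))
    (hD : D = {ys | (∀ i : Fin q, 0 ≤ ys i.castSucc) ∧ (∑ i : Fin q, ys i.castSucc) ≤ 1 ∧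
      ys (Fin.last q) ≤ ⨅ x : X, ((∑ i : Fin q, ys i.castSucc * Gam G x.1 i.castSucc) +
        (1 - ∑ i : Fin q, ys i.castSucc) * Gam G x.1 (Fin.last q))})
    (hDo : Douter - {euc (Pi.single (Fin.last q) ε)} ⊆ D)
    (hPi : Pinner = {y | ∀ ys ∈ Douter, 0 ≤ phi y ys}) :
    ((Gam G '' X) + orth (q + 1)) + {euc fun _ => ε} ⊆ Pinner := by
  rintro y hy
  rw [Set.add_singleton] at hy
  obtain ⟨z, hz, rfl⟩ := hy
  rw [Set.mem_add] at hz
  obtain ⟨g, hg, r, hr, rfl⟩ := hz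
  obtain ⟨x₀, hx₀, rfl⟩ := hg
  rw [hPi]
  intro ys hys
  have hmem : ys - euc (Pi.single (Fin.last q) ε) ∈ D :=
    hDo (Set.sub_mem_sub hys rfl)
  rw [hD] at hmem
  obtain ⟨h1, h2, h3⟩ := hmem
  have hsub_cs : ∀ i : Fin q, (ys - euc (Pi.single (Fin.last q) ε)) i.castSucc = ys i.castSucc := by
    intro i
    have h : (ys - euc (Pi.single (Fin.last q) ε)) i.castSucc
        = ys i.castSucc - (euc (Pi.single (Fin.last q) ε)) i.castSucc := rfl
    rw [h]
    simp [euc, Pi.single_apply, (Fin.castSucc_lt_last i).ne]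
  have hsub_last : (ys - euc (Pi.single (Fin.last q) ε)) (Fin.last q) = ys (Fin.last q) - ε := by
    have h : (ys - euc (Pi.single (Fin.last q) ε)) (Fin.last q)
        = ys (Fin.last q) - (euc (Pi.single (Fin.last q) ε)) (Fin.last q) := rfl
    rw [h]; simp [euc]
  simp only [hsub_cs, hsub_last] at h1 h2 h3
  set F : (Fin n → ℝ) → ℝ := fun x =>
    (∑ i : Fin q, ys i.castSucc * Gam G x i.castSucc) +
      (1 - ∑ i : Fin q, ys i.castSucc) * Gam G x (Fin.last q) with hF
  have hFcont : Continuous F := by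
    have hmv : ∀ i : Fin q, Continuous fun x : Fin n → ℝ => G.mulVec x i := by
      intro i
      simp only [Matrix.mulVec, dotProduct]
      exact continuous_finset_sum _ fun j _ => (continuous_const.mul (continuous_apply j))
    have hGam : ∀ i : Fin (q+1), Continuous fun x : Fin n → ℝ => Gam G x i := by
      intro i
      induction i using Fin.lastCases with
      | last =>
        simp only [Gam, euc, Fin.snoc_last]
        exact (continuous_finset_sum _ fun j _ => hmv j).neg
      | cast i =>
        simp only [Gam, euc, Fin.snoc_castSucc]
        exact hmv i
    exact ((continuous_finset_sum _ fun i _ => continuous_const.mul (hGam i.castSucc)).add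
      (continuous_const.mul (hGam (Fin.last q))))
  have hbdd : BddBelow (Set.range fun x : X => F x.1) := by
    rw [← Set.image_eq_range]
    exact (hXc.image hFcont).bddBelow
  have hinf : (⨅ x : X, F x.1) ≤ F x₀ := ciInf_le hbdd ⟨x₀, hx₀⟩
  have hkey : ys (Fin.last q) - ε ≤ F x₀ := le_trans h3 hinf
  have hrt : 0 ≤ ∑ i : Fin q, r i.castSucc * ys i.castSucc :=
    Finset.sum_nonneg fun i _ => mul_nonneg (hr i.castSucc) (h1 i)
  have hrl : 0 ≤ (1 - ∑ i : Fin q, ys i.castSucc) * r (Fin.last q) :=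
    mul_nonneg (by linarith) (hr (Fin.last q))
  have happ : ∀ i : Fin (q+1),
      (Gam G x₀ + r + (euc fun _ => ε) : EuclideanSpace ℝ (Fin (q+1))) i
        = Gam G x₀ i + r i + ε := fun i => rfl
  have hsplit : ∑ i : Fin q, (Gam G x₀ i.castSucc + r i.castSucc + ε) * ys i.castSucc
      = (∑ i : Fin q, ys i.castSucc * Gam G x₀ i.castSucc)
        + (∑ i : Fin q, r i.castSucc * ys i.castSucc)
        + ε * ∑ i : Fin q, ys i.castSucc := by
    rw [Finset.mul_sum, ← Finset.sum_add_distrib, ← Finset.sum_add_distrib]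
    exact Finset.sum_congr rfl fun i _ => by ring
  have hphi : phi (Gam G x₀ + r + (euc fun _ => ε)) ys =
      F x₀ + (∑ i : Fin q, r i.castSucc * ys i.castSucc)
        + (1 - ∑ i : Fin q, ys i.castSucc) * r (Fin.last q)
        + ε - ys (Fin.last q) := by
    simp only [phi, happ, hsplit, hF]
    ring
  show 0 ≤ phi (Gam G x₀ + r + (euc fun _ => ε)) ys
  rw [hphi]
  linarith
end
end

section
/- Let q ≥ 1. For i ∈ {1, …, q+1} define xⁱ := (1/i) ∑_{j=1}^i e^j ∈ ℝ^{q+1}, and for ε > 0 define x⁰(ε) := (1/(q+1)) ∑_{i=1}^{q+1} xⁱ − εe. Let P_inner := conv{x¹, …, x^{q+1}} + ℝ₊^{q+1} and P(ε) := conv{x⁰(ε), x¹, …, x^{q+1}} + ℝ₊^{q+1}. Then there exists ε₀ > 0 such that for all ε ∈ (0, ε₀): P_inner ⊆ P(ε) and d_H(P_inner, P(ε)) = ε√(q+1). In particular, the bound d_H(P_inner, P) ≤ ε√(q+1) for inner approximations of upper images of multiobjective convex programs is tight. -/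
noncomputable section
open Pointwise

/-- tightness of the bound ε√(q+1) for the dual algorithm (Example 4.1). -/
theorem stmt_13 (q : ℕ) (hq : 1 ≤ q)
    (xi : ℕ → EuclideanSpace ℝ (Fin (q + 1)))
    (hxi : ∀ m, xi m = euc fun k => if (k : ℕ) < m then 1 / (m : ℝ) else 0)
    (x0 : ℝ → EuclideanSpace ℝ (Fin (q + 1)))
    (hx0 : ∀ ε, x0 ε = euc fun k =>
      (1 / ((q : ℝ) + 1)) * ∑ m ∈ Finset.Icc 1 (q + 1), xi m k - ε)
    (Pinner : Set (EuclideanSpace ℝ (Fin (q + 1))))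
    (hPinner : Pinner =
      convexHull ℝ {y | ∃ m ∈ Finset.Icc 1 (q + 1), y = xi m} + orth (q + 1))
    (P : ℝ → Set (EuclideanSpace ℝ (Fin (q + 1))))
    (hP : ∀ ε, P ε =
      convexHull ℝ (insert (x0 ε) {y | ∃ m ∈ Finset.Icc 1 (q + 1), y = xi m}) + orth (q + 1)) :
    ∃ ε₀ > 0, ∀ ε : ℝ, 0 < ε → ε < ε₀ →
      Pinner ⊆ P ε ∧
      Metric.hausdorffDist Pinner (P ε) = ε * Real.sqrt ((q : ℝ) + 1) := by
  refine ⟨1, one_pos, fun ε hε hε1 => ?_⟩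
  set S : Set (EuclideanSpace ℝ (Fin (q+1))) := {y | ∃ m ∈ Finset.Icc 1 (q+1), y = xi m}
    with hS
  set E : EuclideanSpace ℝ (Fin (q+1)) := euc (fun _ => 1) with hE
  have hq1 : (0:ℝ) < (q:ℝ) + 1 := by positivity
  have hspos : 0 < Real.sqrt ((q:ℝ)+1) := Real.sqrt_pos.2 hq1
  have hEnorm : ‖E‖ = Real.sqrt ((q:ℝ)+1) := by
    rw [EuclideanSpace.norm_eq]
    have : ∀ k : Fin (q+1), E k = 1 := fun k => rfl
    simp only [this, norm_one, one_pow, Finset.sum_const, Finset.card_univ,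
      Fintype.card_fin, nsmul_eq_mul, mul_one, Nat.cast_add, Nat.cast_one]
  -- each xi m has coordinate sum 1
  have hsum_xi : ∀ m ∈ Finset.Icc 1 (q+1), ∑ k, xi m k = 1 := by
    intro m hm
    rw [Finset.mem_Icc] at hm
    rw [hxi]
    show ∑ k : Fin (q+1), (if (k:ℕ) < m then 1/(m:ℝ) else 0) = 1
    rw [Fin.sum_univ_eq_sum_range (fun j => if j < m then 1/(m:ℝ) else 0)]
    have hfil : (Finset.range (q+1)).filter (fun j => j < m) = Finset.range m := by
      ext j; simp only [Finset.mem_filter, Finset.mem_range]; omega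
    rw [← Finset.sum_filter, hfil, Finset.sum_const, Finset.card_range, nsmul_eq_mul]
    have hm0 : (m:ℝ) ≠ 0 := Nat.cast_ne_zero.2 (by omega)
    rw [mul_one_div, div_self hm0]
  -- points of the convex hull of S have coordinate sum 1
  have hconvS : ∀ c ∈ convexHull ℝ S, ∑ k, c k = 1 := by
    have hcvx : Convex ℝ {y : EuclideanSpace ℝ (Fin (q+1)) | ∑ k, y k = 1} := by
      intro x hx y hy a b ha hb hab
      simp only [Set.mem_setOf_eq] at hx hy ⊢
      have : ∀ k : Fin (q+1), (a • x + b • y) k = a * x k + b * y k := by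
        intro k; simp [PiLp.add_apply, PiLp.smul_apply, smul_eq_mul]
      simp only [this, Finset.sum_add_distrib, ← Finset.mul_sum, hx, hy, mul_one]
      exact hab
    have hsub : S ⊆ {y : EuclideanSpace ℝ (Fin (q+1)) | ∑ k, y k = 1} := by
      rintro y ⟨m, hm, rfl⟩; exact hsum_xi m hm
    exact fun c hc => convexHull_min hsub hcvx hc
  -- sum of coordinates of x0 ε
  have hsum_x0 : ∑ k, x0 ε k = 1 - ε * ((q:ℝ)+1) := by
    rw [hx0]
    show ∑ k : Fin (q+1), ((1/((q:ℝ)+1)) * ∑ m ∈ Finset.Icc 1 (q+1), xi m k - ε) = _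
    rw [Finset.sum_sub_distrib, ← Finset.mul_sum, Finset.sum_comm]
    have : ∑ m ∈ Finset.Icc 1 (q+1), ∑ k, xi m k = (q:ℝ)+1 := by
      rw [Finset.sum_congr rfl hsum_xi, Finset.sum_const, Nat.card_Icc, nsmul_eq_mul]
      push_cast; ring
    rw [this, Finset.sum_const, Finset.card_univ, Fintype.card_fin, nsmul_eq_mul]
    field_simp
    push_cast; ring
  -- barycenter lies in the convex hull of S
  have hbar : x0 ε + ε • E ∈ convexHull ℝ S := by
    have hmem : (Finset.Icc 1 (q+1)).centerMass (fun _ => (1:ℝ)) xi ∈ convexHull ℝ S := by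
      refine Finset.centerMass_mem_convexHull _ (fun i _ => zero_le_one) ?_
        (fun m hm => ⟨m, hm, rfl⟩)
      rw [Finset.sum_const, Nat.card_Icc, nsmul_eq_mul, mul_one]
      have : q + 1 + 1 - 1 = q + 1 := by omega
      rw [this]; positivity
    convert hmem using 1
    rw [Finset.centerMass]
    ext k
    have hcard : ∑ _x ∈ Finset.Icc 1 (q+1), (1:ℝ) = (q:ℝ)+1 := by
      rw [Finset.sum_const, Nat.card_Icc, nsmul_eq_mul, mul_one,
        Nat.add_sub_cancel]
      push_cast; ring
    have hL : (x0 ε + ε • E) k = (1/((q:ℝ)+1)) * ∑ m ∈ Finset.Icc 1 (q+1), xi m k := by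
      have h1 : (x0 ε + ε • E) k = x0 ε k + ε * E k := by
        simp [PiLp.add_apply, PiLp.smul_apply, smul_eq_mul]
      have h2 : E k = 1 := rfl
      rw [h1, h2, hx0]
      show (1/((q:ℝ)+1)) * ∑ m ∈ Finset.Icc 1 (q+1), xi m k - ε + ε * 1 = _
      ring
    have hR : ((∑ _x ∈ Finset.Icc 1 (q+1), (1:ℝ))⁻¹ •
        ∑ m ∈ Finset.Icc 1 (q+1), (1:ℝ) • xi m) k
        = ((q:ℝ)+1)⁻¹ * ∑ m ∈ Finset.Icc 1 (q+1), xi m k := by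
      rw [hcard]
      simp only [one_smul, PiLp.smul_apply, smul_eq_mul]
      congr 1
      rw [WithLp.ofLp_sum]; exact Finset.sum_apply k _ _
    rw [hL, hR, one_div]
  -- Pinner ⊆ P ε
  have hsub : Pinner ⊆ P ε := by
    rw [hPinner, hP]
    exact Set.add_subset_add_right (convexHull_mono (Set.subset_insert _ _))
  have hSne : S.Nonempty := ⟨xi 1, 1, by simp, rfl⟩
  have h0orth : (0 : EuclideanSpace ℝ (Fin (q+1))) ∈ orth (q+1) := fun i => le_refl 0
  have hx0mem : x0 ε ∈ P ε := by
    rw [hP]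
    exact Set.mem_add.2 ⟨x0 ε, subset_convexHull ℝ _ (Set.mem_insert _ _), 0, h0orth,
      add_zero _⟩
  have hPinne : Pinner.Nonempty := by
    rw [hPinner]
    exact ⟨xi 1 + 0, Set.mem_add.2 ⟨xi 1, subset_convexHull ℝ _ ⟨1, by simp, rfl⟩, 0,
      h0orth, rfl⟩⟩
  -- upper bound: every point of P ε is within ε√(q+1) of Pinner
  have hup : ∀ b ∈ P ε, ∃ a ∈ Pinner, dist a b ≤ ε * Real.sqrt ((q:ℝ)+1) := by
    intro b hb
    rw [hP] at hb
    rcases Set.mem_add.1 hb with ⟨c, hc, r, hr, rfl⟩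
    rw [convexHull_insert hSne, mem_convexJoin] at hc
    rcases hc with ⟨p, hp, z, hz, t, u, ht, hu, htu, rfl⟩
    rw [Set.mem_singleton_iff] at hp; subst hp
    refine ⟨(t • x0 ε + u • z + r) + (t*ε) • E, ?_, ?_⟩
    · rw [hPinner]
      refine Set.mem_add.2 ⟨t • (x0 ε + ε • E) + u • z, ?_, r, hr, ?_⟩
      · exact (convex_convexHull ℝ S) hbar hz ht hu htu
      · module
    · have hde : dist ((t • x0 ε + u • z + r) + (t*ε) • E) (t • x0 ε + u • z + r)
          = ‖(t*ε) • E‖ := by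
        rw [dist_eq_norm]; congr 1; abel
      rw [hde, norm_smul, hEnorm, Real.norm_eq_abs,
        abs_of_nonneg (mul_nonneg ht hε.le)]
      have ht1 : t ≤ 1 := by linarith
      nlinarith [mul_nonneg (mul_nonneg (sub_nonneg.2 ht1) hε.le)
        (Real.sqrt_nonneg ((q:ℝ)+1))]
  -- lower bound: x0 ε is at distance ≥ ε√(q+1) from Pinner
  have hlow : ∀ a ∈ Pinner, ε * Real.sqrt ((q:ℝ)+1) ≤ dist (x0 ε) a := by
    intro a ha
    rw [hPinner] at ha
    rcases Set.mem_add.1 ha with ⟨c, hc, r, hr, rfl⟩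
    have hsa : (1:ℝ) ≤ ∑ k, (c + r) k := by
      have h1 : ∑ k, c k = 1 := hconvS c hc
      have h2 : ∑ k, (c+r) k = ∑ k, c k + ∑ k, r k := by
        simp [PiLp.add_apply, Finset.sum_add_distrib]
      have h3 : (0:ℝ) ≤ ∑ k, r k := Finset.sum_nonneg (fun k _ => hr k)
      rw [h2, h1]; linarith
    have hinner : ((q:ℝ)+1) * ε ≤ inner ℝ E ((c+r) - x0 ε) := by
      have : (inner ℝ E ((c+r) - x0 ε) : ℝ) = ∑ k, ((c+r) k - x0 ε k) := by
        rw [PiLp.inner_apply]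
        refine Finset.sum_congr rfl (fun k _ => ?_)
        have hEk : E k = 1 := rfl
        have : ((c+r) - x0 ε) k = (c+r) k - x0 ε k := rfl
        rw [this, RCLike.inner_apply, hEk]
        simp
      rw [this, Finset.sum_sub_distrib, hsum_x0]
      linarith
    have hcs : (inner ℝ E ((c+r) - x0 ε) : ℝ) ≤ ‖E‖ * ‖(c+r) - x0 ε‖ :=
      real_inner_le_norm _ _
    rw [hEnorm] at hcs
    rw [dist_eq_norm']
    have hs2 : Real.sqrt ((q:ℝ)+1) * Real.sqrt ((q:ℝ)+1) = (q:ℝ)+1 :=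
      Real.mul_self_sqrt hq1.le
    nlinarith [norm_nonneg ((c+r) - x0 ε)]
  -- assemble
  have hεs : 0 ≤ ε * Real.sqrt ((q:ℝ)+1) := by positivity
  have hne : EMetric.hausdorffEdist Pinner (P ε) ≠ ⊤ := by
    refine LT.lt.ne (lt_of_le_of_lt
      (EMetric.hausdorffEdist_le_of_mem_edist
        (r := ENNReal.ofReal (ε * Real.sqrt ((q:ℝ)+1))) ?_ ?_) ENNReal.ofReal_lt_top)
    · intro x hx
      exact ⟨x, hsub hx, by rw [edist_self]; exact zero_le⟩
    · intro x hx
      obtain ⟨a, ha, hd⟩ := hup x hx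
      exact ⟨a, ha, (edist_le_ofReal hεs).2 (by rwa [dist_comm] at hd)⟩
  have hle : Metric.hausdorffDist Pinner (P ε) ≤ ε * Real.sqrt ((q:ℝ)+1) := by
    refine Metric.hausdorffDist_le_of_mem_dist hεs ?_ ?_
    · intro x hx; exact ⟨x, hsub hx, by rw [dist_self]; exact hεs⟩
    · intro x hx
      obtain ⟨a, ha, hd⟩ := hup x hx
      exact ⟨a, ha, by rwa [dist_comm] at hd⟩
  have hge : ε * Real.sqrt ((q:ℝ)+1) ≤ Metric.hausdorffDist Pinner (P ε) := by
    rw [Metric.hausdorffDist_comm]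
    refine le_trans ?_ (Metric.infDist_le_hausdorffDist_of_mem hx0mem
      (by rw [Metric.hausdorffEDist_comm]; exact hne))
    rw [Metric.infDist_eq_iInf]
    haveI : Nonempty Pinner := hPinne.to_subtype
    exact le_ciInf (fun a => hlow a a.2)
  exact ⟨hsub, le_antisymm hle hge⟩
end
end

section
/- Let q ≥ 1, ε = 1/(q+1), and let Δ := {x ∈ ℝ^q : x ≥ 0, eᵀx ≤ 1} be the standard simplex. Then the Hausdorff distance between the singleton {(1/(q+1))e} and Δ satisfies d_H({(1/(q+1))e}, Δ) = ‖e¹ − (1/(q+1))e‖₂ = ε√(q² + q − 1), where e¹ is the first standard unit vector of ℝ^q. In particular, the bound d_H(Y_inner, Y) ≤ ε√(q² + q − 1) for inner polyhedral approximations of convex projection problems is tight. -/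
noncomputable section
open Pointwise

/-- tightness of the bound ε√(q²+q−1) for the dual algorithm (Example 4.2). -/
theorem stmt_15 (q : ℕ) (hq : 1 ≤ q) (ε : ℝ) (hε : ε = 1 / ((q : ℝ) + 1)) :
    Metric.hausdorffDist {euc fun _ : Fin q => 1 / ((q : ℝ) + 1)}
      {x : EuclideanSpace ℝ (Fin q) | (∀ i, 0 ≤ x i) ∧ ∑ i, x i ≤ 1}
      = ‖euc (Pi.single (⟨0, hq⟩ : Fin q) 1) - euc fun _ : Fin q => 1 / ((q : ℝ) + 1)‖ ∧
    Metric.hausdorffDist {euc fun _ : Fin q => 1 / ((q : ℝ) + 1)}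
      {x : EuclideanSpace ℝ (Fin q) | (∀ i, 0 ≤ x i) ∧ ∑ i, x i ≤ 1}
      = ε * Real.sqrt ((q : ℝ) ^ 2 + q - 1) := by
  subst hε
  have hq1 : (1:ℝ) ≤ (q:ℝ) := by exact_mod_cast hq
  have hqpos : (0:ℝ) < (q : ℝ) + 1 := by linarith
  set ε : ℝ := 1 / ((q : ℝ) + 1) with hε
  have hεpos : 0 < ε := by positivity
  have hεle : ε ≤ 1 / 2 := by
    rw [hε, div_le_div_iff₀ hqpos (by norm_num)]; linarith
  set c : EuclideanSpace ℝ (Fin q) := euc fun _ : Fin q => ε with hc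
  set Δ : Set (EuclideanSpace ℝ (Fin q)) :=
    {x : EuclideanSpace ℝ (Fin q) | (∀ i, 0 ≤ x i) ∧ ∑ i, x i ≤ 1} with hΔ
  set i0 : Fin q := ⟨0, hq⟩ with hi0
  have hA : (0:ℝ) ≤ (q:ℝ) ^ 2 + (q:ℝ) - 1 := by nlinarith
  set R : ℝ := ε * Real.sqrt ((q:ℝ) ^ 2 + q - 1) with hR
  have hR0 : 0 ≤ R := by positivity
  have hRsq : R ^ 2 = 1 - 2 * ε + (q:ℝ) * ε ^ 2 := by
    rw [hR, mul_pow, Real.sq_sqrt hA, hε]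
    field_simp
    ring
  -- sums of Pi.single
  have e1 : ∑ i : Fin q, (Pi.single i0 (1:ℝ) : Fin q → ℝ) i = 1 := by
    simp [Finset.sum_pi_single']
  have e2 : ∑ i : Fin q, ((Pi.single i0 (1:ℝ) : Fin q → ℝ) i) ^ 2 = 1 := by
    have h : ∀ i, ((Pi.single i0 (1:ℝ) : Fin q → ℝ) i) ^ 2 = (Pi.single i0 (1:ℝ) : Fin q → ℝ) i := by
      intro i
      rcases eq_or_ne i i0 with h | h <;> simp [Pi.single_apply, h]
    rw [Finset.sum_congr rfl fun i _ => h i, e1]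
  -- generic expansion
  have expand : ∀ v : Fin q → ℝ,
      ∑ i, (v i - ε) ^ 2 = (∑ i, (v i) ^ 2) - 2 * ε * (∑ i, v i) + (q:ℝ) * ε ^ 2 := by
    intro v
    have h : ∀ i : Fin q, (v i - ε) ^ 2 = (v i) ^ 2 - 2 * ε * v i + ε ^ 2 := by
      intro i; ring
    rw [Finset.sum_congr rfl fun i _ => h i, Finset.sum_add_distrib,
      Finset.sum_sub_distrib, ← Finset.mul_sum, Finset.sum_const, Finset.card_univ,
      Fintype.card_fin, nsmul_eq_mul]
  -- norm of e¹ - c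
  have hnorm : ‖euc ((Pi.single i0 (1:ℝ) : Fin q → ℝ)) - c‖ = R := by
    rw [EuclideanSpace.norm_eq]
    have hterm : ∀ i : Fin q, ‖(euc ((Pi.single i0 (1:ℝ) : Fin q → ℝ)) - c) i‖ ^ 2
        = ((Pi.single i0 (1:ℝ) : Fin q → ℝ) i - ε) ^ 2 := by
      intro i
      rw [Real.norm_eq_abs, sq_abs]
      rfl
    rw [Finset.sum_congr rfl fun i _ => hterm i, expand, e1, e2, mul_one, ← hRsq,
      Real.sqrt_sq hR0]
  -- memberships
  have hcΔ : c ∈ Δ := by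
    constructor
    · intro i; exact le_of_lt hεpos
    · have : ∑ _i : Fin q, ε = (q:ℝ) * ε := by
        rw [Finset.sum_const, Finset.card_univ, Fintype.card_fin, nsmul_eq_mul]
      show (∑ _i : Fin q, ε) ≤ 1
      rw [this, hε]
      rw [mul_one_div, div_le_one hqpos]; linarith
  have he1Δ : euc ((Pi.single i0 (1:ℝ) : Fin q → ℝ)) ∈ Δ := by
    constructor
    · intro i
      show (0:ℝ) ≤ (Pi.single i0 (1:ℝ) : Fin q → ℝ) i
      rcases eq_or_ne i i0 with h | h <;> simp [Pi.single_apply, h]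
    · show (∑ i, (Pi.single i0 (1:ℝ) : Fin q → ℝ) i) ≤ 1
      rw [e1]
  -- upper bound
  have hub : ∀ x ∈ Δ, dist x c ≤ R := by
    intro x hx
    obtain ⟨hpos, hsle⟩ := hx
    have hs0 : 0 ≤ ∑ i, x i := Finset.sum_nonneg fun i _ => hpos i
    have hts : ∑ i, (x i) ^ 2 ≤ (∑ i, x i) ^ 2 :=
      Finset.sum_sq_le_sq_sum_of_nonneg fun i _ => hpos i
    rw [EuclideanSpace.dist_eq, show R = Real.sqrt (R ^ 2) from (Real.sqrt_sq hR0).symm]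
    apply Real.sqrt_le_sqrt
    have hterm : ∀ i : Fin q, dist (x i) (c i) ^ 2 = (x i - ε) ^ 2 := by
      intro i
      rw [Real.dist_eq, sq_abs]
      rfl
    rw [Finset.sum_congr rfl fun i _ => hterm i, expand, hRsq]
    nlinarith [mul_nonneg (sub_nonneg.2 hsle) (by linarith : (0:ℝ) ≤ 1 + (∑ i, x i) - 2 * ε)]
  -- boundedness / ne_top
  have hbdd : Bornology.IsBounded Δ := by
    apply (Metric.isBounded_closedBall (x := (0 : EuclideanSpace ℝ (Fin q))) (r := 1)).subset
    intro x hx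
    obtain ⟨hpos, hsle⟩ := hx
    rw [Metric.mem_closedBall, dist_zero_right, EuclideanSpace.norm_eq]
    rw [show (1:ℝ) = Real.sqrt 1 from (Real.sqrt_one).symm]
    apply Real.sqrt_le_sqrt
    have hle1 : ∀ i, x i ≤ 1 := by
      intro i
      calc x i ≤ ∑ j, x j := Finset.single_le_sum (fun j _ => hpos j) (Finset.mem_univ i)
        _ ≤ 1 := hsle
    calc ∑ i, ‖x i‖ ^ 2 = ∑ i, (x i) ^ 2 := by
          refine Finset.sum_congr rfl fun i _ => ?_
          rw [Real.norm_eq_abs, sq_abs]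
      _ ≤ ∑ i, x i := Finset.sum_le_sum fun i _ => by nlinarith [hpos i, hle1 i]
      _ ≤ 1 := hsle
  have hneΔ : Δ.Nonempty := ⟨c, hcΔ⟩
  have hnet : Metric.hausdorffEDist ({c} : Set (EuclideanSpace ℝ (Fin q))) Δ ≠ ⊤ :=
    Metric.hausdorffEdist_ne_top_of_nonempty_of_bounded (Set.singleton_nonempty c) hneΔ
      Bornology.isBounded_singleton hbdd
  have hmain : Metric.hausdorffDist ({c} : Set (EuclideanSpace ℝ (Fin q))) Δ = R := by
    apply le_antisymm
    · apply Metric.hausdorffDist_le_of_mem_dist hR0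
      · intro x hx
        rw [Set.mem_singleton_iff] at hx
        exact ⟨c, hcΔ, by rw [hx, dist_self]; exact hR0⟩
      · intro x hx
        exact ⟨c, Set.mem_singleton c, hub x hx⟩
    · have hnet' : Metric.hausdorffEDist Δ ({c} : Set (EuclideanSpace ℝ (Fin q))) ≠ ⊤ := by
        rwa [Metric.hausdorffEDist_comm] at hnet
      have h := Metric.infDist_le_hausdorffDist_of_mem he1Δ hnet'
      rwa [Metric.infDist_singleton, dist_eq_norm, hnorm, Metric.hausdorffDist_comm] at h
  exact ⟨hmain.trans hnorm.symm, hmain⟩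
end
end
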